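/- For any integer n ≥ 1 and l ≥ 0, the sum over all tuples L = (l₁,…,l_n) of non-negative integers with l₁+⋯+l_n = l of the quantity Σ_{1 ≤ m < m' ≤ n} l_m l_{m'} equals C(n,2)·C(n+l-1, n+1). -/

import Mathlib

open Finset

lemma hockey (k : ℕ) : ∀ n : ℕ, ∑ b ∈ range (n+1), (b+k).choose k = (n+k+1).choose (k+1) := by
  intro n
  induction n with
  | zero => simp
  | succ m ih =>
      rw [Finset.sum_range_succ, ih]
      have h : m+1+k+1 = (m+k+1)+1 := by ring
      rw [h, Nat.choose_succ_succ (m+k+1) k]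
      have h2 : m+1+k = m+k+1 := by ring
      rw [h2, Nat.add_comm]

lemma rec_cons {M : Type*} [AddCommMonoid M] (k n : ℕ) (g : (Fin (k+1) → ℕ) → M) :
    ∑ L ∈ Finset.Nat.antidiagonalTuple (k+1) n, g L
      = ∑ x ∈ Finset.HasAntidiagonal.antidiagonal n,
          ∑ f ∈ Finset.Nat.antidiagonalTuple k x.2, g (Fin.cons x.1 f) := by
  rw [← Finset.sum_sigma (Finset.HasAntidiagonal.antidiagonal n)
      (fun x => Finset.Nat.antidiagonalTuple k x.2) (fun p => g (Fin.cons p.1.1 p.2))]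
  refine Finset.sum_nbij' (i := fun L => (⟨(L 0, ∑ i : Fin k, Fin.tail L i), Fin.tail L⟩ :
      Σ _x : ℕ × ℕ, (Fin k → ℕ))) (j := fun p => Fin.cons p.1.1 p.2) ?_ ?_ ?_ ?_ ?_
  · intro L hL
    rw [Finset.Nat.mem_antidiagonalTuple] at hL
    simp only [Finset.mem_sigma, Finset.HasAntidiagonal.mem_antidiagonal,
      Finset.Nat.mem_antidiagonalTuple]
    refine ⟨?_, trivial⟩
    rw [← hL, Fin.sum_univ_succ]
    rfl
  · intro p hp
    simp only [Finset.mem_sigma, Finset.HasAntidiagonal.mem_antidiagonal,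
      Finset.Nat.mem_antidiagonalTuple] at hp
    rw [Finset.Nat.mem_antidiagonalTuple, Fin.sum_univ_succ]
    simp [Fin.tail_cons, hp.2, hp.1]
  · intro L _; exact Fin.cons_self_tail L
  · intro p hp
    simp only [Finset.mem_sigma, Finset.HasAntidiagonal.mem_antidiagonal,
      Finset.Nat.mem_antidiagonalTuple] at hp
    refine Sigma.ext ?_ (by simp [Fin.tail_cons])
    simp [Fin.tail_cons, hp.2]
  · intro L _; simp [Fin.cons_self_tail]

lemma card_adt (k : ℕ) : ∀ n : ℕ, (Finset.Nat.antidiagonalTuple (k+1) n).card = (n+k).choose k := by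
  induction k with
  | zero => intro n; rw [Finset.Nat.antidiagonalTuple_one]; simp
  | succ m ih =>
      intro n
      rw [Finset.card_eq_sum_ones, rec_cons]
      simp_rw [← Finset.card_eq_sum_ones, ih]
      rw [Finset.Nat.sum_antidiagonal_eq_sum_range_succ (f := fun _a b => (b+m).choose m)]
      rw [show (n+(m+1)) = n+m+1 by ring, ← hockey m n,
        ← Finset.sum_range_reflect (fun b => (b+m).choose m) (n+1)]
      simp

lemma hockeyG (k m : ℕ) (hkm : k ≤ m) :
    ∀ n : ℕ, ∑ b ∈ range (n+1), (b+k).choose m = (n+k+1).choose (m+1) := by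
  intro n
  induction n with
  | zero =>
      simp only [Finset.range_one, Finset.sum_singleton, Nat.zero_add]
      rw [Nat.choose_succ_succ k m, Nat.choose_eq_zero_of_lt (Nat.lt_succ_of_le hkm),
        Nat.add_zero]
  | succ p ih =>
      rw [Finset.sum_range_succ, ih,
        show p+1+k+1 = (p+k+1)+1 by ring, Nat.choose_succ_succ (p+k+1) m,
        show p+1+k = p+k+1 by ring, Nat.add_comm]

lemma convG (k m : ℕ) (hkm : k ≤ m) :
    ∀ n : ℕ, ∑ i ∈ range (n+1), (n-i) * (i+k).choose m = (n+k+1).choose (m+2) := by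
  intro n
  induction n with
  | zero => simp [Nat.choose_eq_zero_of_lt (show k+1 < m+2 by omega)]
  | succ p ih =>
      rw [Finset.sum_range_succ]
      simp only [Nat.sub_self, Nat.zero_mul, Nat.add_zero]
      have step : ∀ i ∈ range (p+1), (p+1-i) * (i+k).choose m
          = (p-i) * (i+k).choose m + (i+k).choose m := by
        intro i hi
        rw [Finset.mem_range] at hi
        have h : p+1-i = (p-i)+1 := by omega
        rw [h, Nat.succ_mul]
      rw [Finset.sum_congr rfl step, Finset.sum_add_distrib, ih, hockeyG k m hkm p,
        show p+1+k+1 = (p+k+1)+1 by ring, Nat.choose_succ_succ (p+k+1) (m+1)]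
      exact Nat.add_comm _ _

lemma sum_coord0 (k : ℕ) : ∀ n : ℕ,
    ∑ L ∈ Finset.Nat.antidiagonalTuple (k+1) n, L 0 = (n+k).choose (k+1) := by
  induction k with
  | zero =>
      intro n
      rw [Finset.Nat.antidiagonalTuple_one, Finset.sum_singleton]
      simp
  | succ m ih =>
      intro n
      rw [rec_cons]
      have h1 : ∀ x ∈ Finset.HasAntidiagonal.antidiagonal n,
          ∑ f ∈ Finset.Nat.antidiagonalTuple (m+1) x.2, (Fin.cons x.1 f : Fin (m+2) → ℕ) 0
            = (x.2+m).choose m * x.1 := by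
        intro x _
        simp only [Fin.cons_zero]
        rw [Finset.sum_const, card_adt m x.2, smul_eq_mul]
      rw [Finset.sum_congr rfl h1,
        Finset.Nat.sum_antidiagonal_eq_sum_range_succ (f := fun a b => (b+m).choose m * a),
        Nat.succ_eq_add_one]
      have hr := Finset.sum_range_reflect (fun i => ((n-i)+m).choose m * i) (n+1)
      rw [← hr]
      have h2 : ∀ j ∈ range (n+1),
          ((n-(n+1-1-j))+m).choose m * (n+1-1-j) = (n-j) * (j+m).choose m := by
        intro j hj
        rw [Finset.mem_range] at hj
        rw [Nat.mul_comm]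
        congr 2
        omega
      rw [Finset.sum_congr rfl h2, convG m m le_rfl n]
      congr 1

lemma pairsum (k n : ℕ) :
    ∑ L ∈ Finset.Nat.antidiagonalTuple (k+2) n, L 0 * L 1 = (n+k+1).choose (k+3) := by
  rw [rec_cons]
  have h1 : ∀ x ∈ Finset.HasAntidiagonal.antidiagonal n,
      ∑ f ∈ Finset.Nat.antidiagonalTuple (k+1) x.2,
        ((Fin.cons x.1 f : Fin (k+2) → ℕ) 0 * (Fin.cons x.1 f : Fin (k+2) → ℕ) 1)
        = (x.2+k).choose (k+1) * x.1 := by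
    intro x _
    have h : ∀ f ∈ Finset.Nat.antidiagonalTuple (k+1) x.2,
        ((Fin.cons x.1 f : Fin (k+2) → ℕ) 0 * (Fin.cons x.1 f : Fin (k+2) → ℕ) 1)
          = x.1 * f 0 := by
      intro f _
      rw [Fin.cons_zero]
      congr 1
    rw [Finset.sum_congr rfl h, ← Finset.mul_sum, sum_coord0 k x.2, Nat.mul_comm]
  rw [Finset.sum_congr rfl h1,
    Finset.Nat.sum_antidiagonal_eq_sum_range_succ (f := fun a b => (b+k).choose (k+1) * a),
    Nat.succ_eq_add_one]
  have hr := Finset.sum_range_reflect (fun i => ((n-i)+k).choose (k+1) * i) (n+1)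
  rw [← hr]
  have h2 : ∀ j ∈ range (n+1),
      ((n-(n+1-1-j))+k).choose (k+1) * (n+1-1-j) = (n-j) * (j+k).choose (k+1) := by
    intro j hj
    rw [Finset.mem_range] at hj
    rw [Nat.mul_comm]
    congr 2
    all_goals omega
  rw [Finset.sum_congr rfl h2, convG k (k+1) (Nat.le_succ k) n]

lemma perm_sum {M : Type*} [AddCommMonoid M] (k n : ℕ) (e : Fin k ≃ Fin k)
    (g : (Fin k → ℕ) → M) :
    ∑ L ∈ Finset.Nat.antidiagonalTuple k n, g (L ∘ e) =
      ∑ L ∈ Finset.Nat.antidiagonalTuple k n, g L := by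
  refine Finset.sum_nbij' (i := fun L => L ∘ e) (j := fun L => L ∘ e.symm) ?_ ?_ ?_ ?_ ?_
  · intro L hL
    rw [Finset.Nat.mem_antidiagonalTuple] at hL ⊢
    rw [← hL]
    exact Fintype.sum_equiv e _ _ (fun i => rfl)
  · intro L hL
    rw [Finset.Nat.mem_antidiagonalTuple] at hL ⊢
    rw [← hL]
    exact Fintype.sum_equiv e.symm _ _ (fun i => rfl)
  · intro L _
    funext i
    simp
  · intro L _
    funext i
    simp
  · intro L _
    rfl

lemma card_pairs (N : ℕ) :
    (Finset.univ.filter (fun p : Fin N × Fin N => p.1 < p.2)).card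
      = ∑ j : Fin N, (j : ℕ) := by
  rw [Finset.card_filter]
  rw [Fintype.sum_prod_type]
  rw [Finset.sum_comm]
  refine Finset.sum_congr rfl fun j _ => ?_
  rw [← Finset.card_filter]
  have h : Finset.univ.filter (fun i : Fin N => i < j) = Finset.Iio j := by
    ext i
    simp
  rw [h, Fin.card_Iio]

theorem stmt1 (n l : ℕ) (hn : 1 ≤ n) :
    ∑ L ∈ Finset.Nat.antidiagonalTuple n l,
      ∑ p ∈ Finset.univ.filter (fun p : Fin n × Fin n => p.1 < p.2), L p.1 * L p.2
      = Nat.choose n 2 * Nat.choose (n + l - 1) (n + 1) := by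
  rcases Nat.lt_or_ge n 2 with h2 | h2
  · -- n = 1
    interval_cases n
    have he : (Finset.univ.filter (fun p : Fin 1 × Fin 1 => p.1 < p.2)) = ∅ := by
      ext p
      simp [Subsingleton.elim p.1 p.2]
    simp [he]
  · obtain ⟨k, rfl⟩ : ∃ k, n = k + 2 := ⟨n - 2, by omega⟩
    rw [Finset.sum_comm]
    have hinner : ∀ p ∈ Finset.univ.filter (fun p : Fin (k+2) × Fin (k+2) => p.1 < p.2),
        ∑ L ∈ Finset.Nat.antidiagonalTuple (k+2) l, L p.1 * L p.2
          = (l+k+1).choose (k+3) := by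
      intro p hp
      rw [Finset.mem_filter] at hp
      have hlt := hp.2
      set e : Fin (k+2) ≃ Fin (k+2) :=
        (Equiv.swap (1 : Fin (k+2)) p.2).trans (Equiv.swap 0 p.1) with he
      have h20 : p.2 ≠ 0 := by
        intro h
        rw [h] at hlt
        exact absurd hlt (Fin.not_lt_zero p.1)
      have h21 : p.2 ≠ p.1 := (Fin.lt_iff_val_lt_val.mp hlt).ne'.imp id ∘ fun h => h ▸ rfl
      have he0 : e 0 = p.1 := by
        simp only [he, Equiv.trans_apply]
        rw [Equiv.swap_apply_of_ne_of_ne (by simp) (Ne.symm h20), Equiv.swap_apply_left]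
      have he1 : e 1 = p.2 := by
        simp only [he, Equiv.trans_apply]
        rw [Equiv.swap_apply_left, Equiv.swap_apply_of_ne_of_ne h20 h21]
      have := perm_sum (k+2) l e (fun L => L 0 * L 1)
      simp only [Function.comp_apply] at this
      rw [he0, he1] at this
      rw [show (∑ L ∈ Finset.Nat.antidiagonalTuple (k+2) l, L p.1 * L p.2)
          = ∑ L ∈ Finset.Nat.antidiagonalTuple (k+2) l, L 0 * L 1 from this, pairsum k l]
    rw [Finset.sum_congr rfl hinner, Finset.sum_const, smul_eq_mul, card_pairs]
    have hsum : ∑ j : Fin (k+2), (j : ℕ) = (k+2).choose 2 := by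
      rw [show (∑ j : Fin (k+2), (j : ℕ)) = ∑ j ∈ range (k+2), j from
        Fin.sum_univ_eq_sum_range (fun x => x) (k+2)]
      have := hockeyG 0 1 (by omega) (k+1)
      simp only [Nat.add_zero, Nat.choose_one_right] at this
      rw [show k+1+1 = k+2 by ring] at this
      rw [this]
    rw [hsum]
    congr 2
    all_goals omega
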